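/- Let σ ≥ 0, x* ∈ C^n with |x*_i| = 1, Z* = x* conj(x*)ᵀ, and let M be the Hermitian matrix with M_{ij} = e^{−σ²/2} Z*_{ij} for i ≠ j and M_{ii} = 1. Let C = {Z ∈ H_n : Z ⪰ 0, Z_{ii} = 1}. Then Z* is the unique maximizer of Z ↦ ⟨M, Z⟩ over C, where ⟨M, Z⟩ = Tr(M conj(Z)ᵀ). -/

import Mathlib

open scoped ComplexOrder

open Finset Matrix

/-- Hermitian trace inner product `⟨M,N⟩ = Tr(M conj(N)ᵀ)` on complex matrices. -/
noncomputable def ipC {n : ℕ} (M N : Matrix (Fin n) (Fin n) ℂ) : ℂ :=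
  ∑ i, ∑ j, M i j * star (N i j)


lemma entry_abs_le {n : ℕ} (Z : Matrix (Fin n) (Fin n) ℂ) (hZ : Z.PosSemidef)
    (hd : ∀ i, Z i i = 1) (i j : Fin n) : ‖Z i j‖ ≤ 1 := by
  rcases eq_or_ne i j with rfl | hij
  · simp [hd i]
  set z : ℂ := Z i j with hz
  rcases eq_or_ne z 0 with h0 | h0
  · simp [← hz, h0]
  set r : ℝ := ‖z‖ with hr
  have hr0 : 0 < r := by simpa [hr] using (norm_pos_iff.mpr h0)
  have hrne : (r : ℂ) ≠ 0 := by exact_mod_cast hr0.ne'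
  have hzz : z * (starRingEnd ℂ) z = (r : ℂ) * r := by
    rw [Complex.mul_conj, hr]
    push_cast [Complex.normSq_eq_norm_sq]
    ring
  have hzz' : (starRingEnd ℂ) z * z = (r : ℂ) * r := by rw [mul_comm]; exact hzz
  set c : ℂ := -(star z) / (r : ℂ) with hc
  set v : Fin n → ℂ := Pi.single i 1 + Pi.single j c with hv
  have key := hZ.re_dotProduct_nonneg v
  have hZji : Z j i = star z := by
    have := congrFun (congrFun hZ.1 j) i
    simpa [Matrix.conjTranspose_apply, ← hz] using this.symm
  have hsc : star c = -z / (r : ℂ) := by simp [hc]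
  have hzc : z * c = -(r : ℂ) := by
    rw [hc]; field_simp; simp only [Complex.star_def]; linear_combination -hzz
  have hcz : star c * star z = -(r : ℂ) := by
    rw [hsc]; field_simp; simp only [Complex.star_def]; linear_combination -hzz
  have hcc : star c * c = 1 := by
    rw [hsc, hc]; field_simp; simp only [Complex.star_def]; linear_combination hzz
  have hsv : star v = Pi.single i 1 + Pi.single j (star c) := by
    simp [hv, star_add, ← Pi.single_star]
  have hdot : dotProduct (star v) (Z *ᵥ v) = ((2 - 2 * r : ℝ) : ℂ) := by
    have h1 : dotProduct (star v) (Z *ᵥ v)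
        = 1 + z * c + star c * star z + star c * c := by
      rw [hsv, hv, Matrix.mulVec_add, Matrix.mulVec_single, Matrix.mulVec_single,
        add_dotProduct, single_dotProduct, single_dotProduct]
      simp only [Pi.add_apply, Pi.smul_apply, Matrix.col_apply, op_smul_eq_mul]
      rw [hd i, hd j, hZji, ← hz]
      ring
    rw [h1, hzc, hcz, hcc]
    push_cast; ring
  rw [hdot] at key
  have key2 : (0:ℝ) ≤ 2 - 2 * r := by simpa using key
  linarith

lemma eq_one_of_re_eq_one {w : ℂ} (h1 : w.re = 1) (h2 : ‖w‖ ≤ 1) : w = 1 := by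
  have h3 : Complex.normSq w ≤ 1 := by
    have := Complex.sq_norm w
    nlinarith [norm_nonneg w]
  have h4 : w.im = 0 := by
    have := Complex.normSq_apply w
    nlinarith
  exact Complex.ext (by simp [h1]) (by simp [h4])

/-- exactness of the SDP relaxation of angular synchronization:
Z* = x* x*ᴴ is the unique maximizer of Z ↦ ⟨M, Z⟩ over the elliptope. -/
theorem stmt_7 {n : ℕ} (hn : 0 < n) (σ : ℝ) (hσ : 0 ≤ σ)
    (xstar : Fin n → ℂ) (hx : ∀ i, ‖xstar i‖ = 1)
    (Zstar : Matrix (Fin n) (Fin n) ℂ)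
    (hZstar : ∀ i j, Zstar i j = xstar i * star (xstar j))
    (M : Matrix (Fin n) (Fin n) ℂ)
    (hM : ∀ i j, M i j =
      if i = j then 1 else (Real.exp (-σ^2/2) : ℂ) * Zstar i j)
    (C : Set (Matrix (Fin n) (Fin n) ℂ))
    (hC : C = {Z | Z.PosSemidef ∧ ∀ i, Z i i = 1}) :
    Zstar ∈ C ∧
      ∀ Z ∈ C, (ipC M Z).re ≤ (ipC M Zstar).re ∧
        ((ipC M Z).re = (ipC M Zstar).re → Z = Zstar) := by
  set a : ℝ := Real.exp (-σ^2/2) with ha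
  have ha0 : 0 < a := Real.exp_pos _
  have habs : ∀ i j, ‖Zstar i j‖ = 1 := by
    intro i j
    rw [hZstar]
    simp [_root_.map_mul, hx]
  have hdiag : ∀ i, Zstar i i = 1 := by
    intro i
    rw [hZstar, Complex.star_def, Complex.mul_conj, Complex.normSq_eq_norm_sq, hx]
    norm_num
  have hmulc : ∀ i j, Zstar i j * star (Zstar i j) = 1 := by
    intro i j
    rw [Complex.star_def, Complex.mul_conj, Complex.normSq_eq_norm_sq, habs]
    norm_num
  have hmem : Zstar ∈ C := by
    rw [hC]
    refine ⟨Matrix.PosSemidef.of_dotProduct_mulVec_nonneg ?_ ?_, hdiag⟩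
    · ext i j
      simp [Matrix.conjTranspose_apply, hZstar, mul_comm]
    · intro v
      have hcalc : dotProduct (star v) (Zstar *ᵥ v)
          = star (∑ j, star (xstar j) * v j) * (∑ j, star (xstar j) * v j) := by
        simp only [dotProduct, Matrix.mulVec, Pi.star_apply, hZstar,
          star_sum, StarMul.star_mul, star_star, Finset.sum_mul, Finset.mul_sum]
        rw [Finset.sum_comm]
        exact Finset.sum_congr rfl fun i _ => Finset.sum_congr rfl fun j _ => by ring
      rw [hcalc]
      exact star_mul_self_nonneg _
  -- termwise bound functions
  have hBval : ∀ i j, (M i j * star (Zstar i j)).re = if i = j then 1 else a := by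
    intro i j
    rcases eq_or_ne i j with rfl | hij
    · simp [hM, hdiag]
    · rw [hM, if_neg hij, if_neg hij, mul_assoc, hmulc]
      simp
  refine ⟨hmem, ?_⟩
  intro Z hZ
  rw [hC] at hZ
  obtain ⟨hZpsd, hZd⟩ := hZ
  have hTle : ∀ i j, (M i j * star (Z i j)).re ≤ (M i j * star (Zstar i j)).re := by
    intro i j
    rw [hBval]
    rcases eq_or_ne i j with rfl | hij
    · simp [hM, hZd]
    · rw [hM, if_neg hij, if_neg hij, mul_assoc]
      have h1 : ((a : ℂ) * (Zstar i j * star (Z i j))).re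
          = a * (Zstar i j * star (Z i j)).re := by
        simp [Complex.re_ofReal_mul]
      rw [h1]
      have h2 : (Zstar i j * star (Z i j)).re ≤ 1 := by
        calc (Zstar i j * star (Z i j)).re ≤ ‖Zstar i j * star (Z i j)‖ :=
              Complex.re_le_norm _
          _ = ‖Zstar i j‖ * ‖Z i j‖ := by
              rw [norm_mul (Zstar i j) (star (Z i j)), Complex.star_def,
                Complex.norm_conj]
          _ ≤ 1 := by rw [habs]; simpa using entry_abs_le Z hZpsd hZd i j
      nlinarith
  have hsum : ∀ W : Matrix (Fin n) (Fin n) ℂ,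
      (ipC M W).re = ∑ i, ∑ j, (M i j * star (W i j)).re := by
    intro W
    rw [ipC, Complex.re_sum]
    exact Finset.sum_congr rfl fun i _ => Complex.re_sum _ _
  have hle : (ipC M Z).re ≤ (ipC M Zstar).re := by
    rw [hsum, hsum]
    exact Finset.sum_le_sum fun i _ => Finset.sum_le_sum fun j _ => hTle i j
  refine ⟨hle, ?_⟩
  intro heq
  rw [hsum, hsum] at heq
  have hinner : ∀ i ∈ Finset.univ, (∑ j, (M i j * star (Z i j)).re)
      = ∑ j, (M i j * star (Zstar i j)).re :=
    (Finset.sum_eq_sum_iff_of_le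
      (fun i _ => Finset.sum_le_sum fun j _ => hTle i j)).mp heq
  have hpt : ∀ i j, (M i j * star (Z i j)).re = (M i j * star (Zstar i j)).re := by
    intro i j
    exact (Finset.sum_eq_sum_iff_of_le (fun j _ => hTle i j)).mp
      (hinner i (Finset.mem_univ i)) j (Finset.mem_univ j)
  ext i j
  rcases eq_or_ne i j with rfl | hij
  · rw [hZd, hdiag]
  · have h := hpt i j
    rw [hBval, if_neg hij, hM, if_neg hij, mul_assoc] at h
    have h1 : a * (Zstar i j * star (Z i j)).re = a := by
      simpa [Complex.re_ofReal_mul] using h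
    have h2 : (Zstar i j * star (Z i j)).re = 1 := by
      refine mul_left_cancel₀ (ne_of_gt ha0) ?_
      rw [h1, mul_one]
    have h3 : ‖Zstar i j * star (Z i j)‖ ≤ 1 := by
      rw [norm_mul (Zstar i j) (star (Z i j)), Complex.star_def,
        Complex.norm_conj, habs i j, one_mul]
      exact entry_abs_le Z hZpsd hZd i j
    have h4 : Zstar i j * star (Z i j) = 1 := eq_one_of_re_eq_one h2 h3
    have hne : Zstar i j ≠ 0 := by
      intro h; rw [h] at h4; simp at h4
    have h5 : star (Z i j) = star (Zstar i j) :=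
      mul_left_cancel₀ hne (h4.trans (hmulc i j).symm)
    have := congrArg star h5
    simpa [star_star] using this
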